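/- Let m ≥ 2 be an integer, let G : [0,∞) → ℝ be continuous with G(t) ≥ 0 for all t ≥ 0, and let h : [0,∞) → ℝ be twice continuously differentiable with h'' = G·h on [0,∞), h(0) = 0 and h'(0) = 1. Let l > 0, let u : [0,l] → ℝ be C², and let φ : (0,l] → ℝ be C¹ and satisfy φ'(t) + φ(t)²/(m−1) ≤ (m−1)·G(t) + u''(t) for every t ∈ (0,l], together with h(t)²·φ(t) → 0 as t → 0⁺. Assume moreover that θ : [0,∞) → ℝ is continuous and nondecreasing and that u'(t) ≥ −θ(t) for all t ∈ [0,l]. Then h(r) > 0 for every r ∈ (0,l] and φ(r) − u'(r) ≤ (m−1)·h'(r)/h(r) + θ(r) for every r ∈ (0,l]. -/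

import Mathlib

open Set Filter MeasureTheory intervalIntegral Topology

theorem part1
    (G h h' h'' : ℝ → ℝ)
    (hGnonneg : ∀ t ≥ (0:ℝ), 0 ≤ G t)
    (hhderiv : ∀ t ∈ Set.Ici (0:ℝ), HasDerivWithinAt h (h' t) (Set.Ici 0) t)
    (hh'deriv : ∀ t ∈ Set.Ici (0:ℝ), HasDerivWithinAt h' (h'' t) (Set.Ici 0) t)
    (hode : ∀ t ≥ (0:ℝ), h'' t = G t * h t)
    (hh0 : h 0 = 0) (hh'0 : h' 0 = 1)
    (l : ℝ) (hl : 0 < l) :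
    ∀ s ∈ Set.Icc (0:ℝ) l, 1 ≤ h' s ∧ s ≤ h s := by
  have hhcont : ContinuousOn h (Ici 0) := fun t ht => (hhderiv t ht).continuousWithinAt
  have hh'cont : ContinuousOn h' (Ici 0) := fun t ht => (hh'deriv t ht).continuousWithinAt
  have hhat : ∀ t : ℝ, 0 < t → HasDerivAt h (h' t) t := fun t ht =>
    (hhderiv t (le_of_lt ht)).hasDerivAt (Ici_mem_nhds ht)
  have hh'at : ∀ t : ℝ, 0 < t → HasDerivAt h' (h'' t) t := fun t ht =>
    (hh'deriv t (le_of_lt ht)).hasDerivAt (Ici_mem_nhds ht)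
  -- key lemma on intervals where h ≥ 0
  have key : ∀ T ∈ Icc (0:ℝ) l, (∀ s ∈ Icc (0:ℝ) T, 0 ≤ h s) →
      ∀ s ∈ Icc (0:ℝ) T, 1 ≤ h' s ∧ s ≤ h s := by
    intro T hT hnn
    have hsub : Icc (0:ℝ) T ⊆ Ici (0:ℝ) := fun x hx => hx.1
    have hmono' : MonotoneOn h' (Icc 0 T) := by
      apply monotoneOn_of_deriv_nonneg (convex_Icc 0 T) (hh'cont.mono hsub)
      · intro x hx
        rw [interior_Icc] at hx
        exact ((hh'at x hx.1).differentiableAt).differentiableWithinAt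
      · intro x hx
        rw [interior_Icc] at hx
        rw [(hh'at x hx.1).deriv, hode x hx.1.le]
        exact mul_nonneg (hGnonneg x hx.1.le) (hnn x ⟨hx.1.le, hx.2.le⟩)
    have h'ge : ∀ s ∈ Icc (0:ℝ) T, 1 ≤ h' s := by
      intro s hs
      have := hmono' ⟨le_refl 0, hs.1.trans hs.2⟩ hs hs.1
      rw [hh'0] at this; exact this
    refine fun s hs => ⟨h'ge s hs, ?_⟩
    have hmono2 : MonotoneOn (fun t => h t - t) (Icc 0 T) := by
      apply monotoneOn_of_deriv_nonneg (convex_Icc 0 T)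
      · exact (hhcont.mono hsub).sub (continuousOn_id)
      · intro x hx
        rw [interior_Icc] at hx
        exact (((hhat x hx.1).sub (hasDerivAt_id' x)).differentiableAt).differentiableWithinAt
      · intro x hx
        rw [interior_Icc] at hx
        rw [((hhat x hx.1).fun_sub (hasDerivAt_id' x)).deriv]
        have := h'ge x ⟨hx.1.le, hx.2.le⟩
        linarith
    have := hmono2 ⟨le_refl 0, hs.1.trans hs.2⟩ hs hs.1
    simp only [hh0] at this
    linarith
  -- small time positivity
  have hsmall : ∃ ε > 0, ∀ t ∈ Ioc (0:ℝ) ε, 0 < h t := by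
    have hd : HasDerivWithinAt h (h' 0) (Ici 0) 0 := hhderiv 0 Set.self_mem_Ici
    rw [hasDerivWithinAt_iff_tendsto_slope] at hd
    have hmono : 𝓝[Ioi (0:ℝ)] 0 ≤ 𝓝[Ici 0 \ {0}] 0 :=
      nhdsWithin_mono _ (fun x hx => ⟨Set.mem_Ici.mpr (le_of_lt (Set.mem_Ioi.mp hx)), ne_of_gt hx⟩)
    have := (hd.mono_left hmono).eventually (lt_mem_nhds (by rw [hh'0]; norm_num : (0:ℝ) < h' 0))
    rw [eventually_iff_exists_mem] at this
    obtain ⟨s, hs, hmem⟩ := this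
    rw [mem_nhdsGT_iff_exists_Ioc_subset] at hs
    obtain ⟨ε, hε, hsub⟩ := hs
    refine ⟨ε, hε, fun t ht => ?_⟩
    have h2 := hmem t (hsub ht)
    rw [slope_def_field, hh0, sub_zero, sub_zero] at h2
    have h3 := mul_pos h2 ht.1
    rwa [div_mul_cancel₀ _ (ne_of_gt ht.1)] at h3
  obtain ⟨ε, hε, hεpos⟩ := hsmall
  -- no zero of h in (0, l]
  have hnn : ∀ s ∈ Icc (0:ℝ) l, 0 ≤ h s := by
    by_contra hcon
    push_neg at hcon
    obtain ⟨t₀, ht₀, ht₀neg⟩ := hcon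
    have ht₀pos : 0 < t₀ := by
      rcases eq_or_lt_of_le ht₀.1 with rfl | hp
      · rw [hh0] at ht₀neg; linarith
      · exact hp
    have hεl : ε < l ∨ True := Or.inr trivial
    set C := {t ∈ Icc ε l | h t ≤ 0} with hC
    have ht₀C : t₀ ∈ C := by
      refine ⟨⟨?_, ht₀.2⟩, ht₀neg.le⟩
      by_contra hlt
      push_neg at hlt
      exact absurd (hεpos t₀ ⟨ht₀pos, hlt.le⟩) (not_lt.2 ht₀neg.le)
    have hCne : C.Nonempty := ⟨t₀, ht₀C⟩
    have hCclosed : IsClosed C := by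
      have : C = Icc ε l ∩ h ⁻¹' (Iic 0) := by ext x; simp [hC, and_comm]
      rw [this]
      apply ContinuousOn.preimage_isClosed_of_isClosed
        (hhcont.mono (fun x hx => le_trans hε.le hx.1)) isClosed_Icc isClosed_Iic
    have hbdd : BddBelow C := ⟨ε, fun x hx => hx.1.1⟩
    set T := sInf C with hTdef
    have hTC : T ∈ C := hCclosed.csInf_mem hCne hbdd
    have hTε : ε ≤ T := hTC.1.1
    have hTl : T ≤ l := hTC.1.2
    have hTpos : 0 < T := lt_of_lt_of_le hε hTε
    -- h ≥ 0 on [0, T)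
    have hlt : ∀ s ∈ Ico (0:ℝ) T, 0 ≤ h s := by
      intro s hs
      rcases eq_or_lt_of_le hs.1 with rfl | hsp
      · rw [hh0]
      rcases le_or_gt s ε with hse | hes
      · exact (hεpos s ⟨hsp, hse⟩).le
      · by_contra hneg
        push_neg at hneg
        have : s ∈ C := ⟨⟨hes.le, lt_of_lt_of_le hs.2 hTl |>.le⟩, hneg.le⟩
        exact absurd (csInf_le hbdd this) (not_le.2 hs.2)
    -- h T ≥ 0 by continuity
    have hT0 : 0 ≤ h T := by
      have hcw : ContinuousWithinAt h (Ico 0 T) T :=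
        (hhcont T hTpos.le).mono (fun x (hx : x ∈ Ico (0:ℝ) T) => hx.1)
      haveI := right_nhdsWithin_Ioo_neBot hTpos
      haveI hne : (𝓝[Ico (0:ℝ) T] T).NeBot :=
        Filter.neBot_of_le (f := 𝓝[Ioo (0:ℝ) T] T)
          (nhdsWithin_mono _ (fun x hx => ⟨hx.1.le, hx.2⟩))
      exact ge_of_tendsto hcw.tendsto (eventually_nhdsWithin_of_forall hlt)
    have hTnn : ∀ s ∈ Icc (0:ℝ) T, 0 ≤ h s := by
      intro s hs
      rcases eq_or_lt_of_le hs.2 with rfl | hsT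
      · exact hT0
      · exact hlt s ⟨hs.1, hsT⟩
    have := (key T ⟨hTpos.le, hTl⟩ hTnn) T ⟨hTpos.le, le_rfl⟩
    linarith [this.2, hTC.2]
  exact key l ⟨le_rfl.trans hl.le, le_rfl⟩ hnn

theorem main_test
    (m : ℕ) (hm : 2 ≤ m)
    (G h h' h'' : ℝ → ℝ)
    (hGcont : ContinuousOn G (Set.Ici 0))
    (hGnonneg : ∀ t ≥ (0:ℝ), 0 ≤ G t)
    (hhderiv : ∀ t ∈ Set.Ici (0:ℝ), HasDerivWithinAt h (h' t) (Set.Ici 0) t)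
    (hh'deriv : ∀ t ∈ Set.Ici (0:ℝ), HasDerivWithinAt h' (h'' t) (Set.Ici 0) t)
    (hh''cont : ContinuousOn h'' (Set.Ici 0))
    (hode : ∀ t ≥ (0:ℝ), h'' t = G t * h t)
    (hh0 : h 0 = 0) (hh'0 : h' 0 = 1)
    (l : ℝ) (hl : 0 < l)
    (u u' u'' : ℝ → ℝ)
    (huderiv : ∀ t ∈ Set.Icc (0:ℝ) l, HasDerivWithinAt u (u' t) (Set.Icc 0 l) t)
    (hu'deriv : ∀ t ∈ Set.Icc (0:ℝ) l, HasDerivWithinAt u' (u'' t) (Set.Icc 0 l) t)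
    (hu''cont : ContinuousOn u'' (Set.Icc 0 l))
    (φ φ' : ℝ → ℝ)
    (hφderiv : ∀ t ∈ Set.Ioc (0:ℝ) l, HasDerivWithinAt φ (φ' t) (Set.Ioc 0 l) t)
    (hφ'cont : ContinuousOn φ' (Set.Ioc 0 l))
    (hRiccati : ∀ t ∈ Set.Ioc (0:ℝ) l,
      φ' t + φ t ^ 2 / ((m : ℝ) - 1) ≤ ((m : ℝ) - 1) * G t + u'' t)
    (hlim : Filter.Tendsto (fun t => h t ^ 2 * φ t)
      (nhdsWithin 0 (Set.Ioi 0)) (nhds 0))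
    (θ : ℝ → ℝ)
    (hθcont : ContinuousOn θ (Set.Ici 0))
    (hθmono : MonotoneOn θ (Set.Ici 0))
    (hu'bound : ∀ t ∈ Set.Icc (0:ℝ) l, -θ t ≤ u' t)
    (hkey : ∀ s ∈ Set.Icc (0:ℝ) l, 1 ≤ h' s ∧ s ≤ h s) :
    ∀ r ∈ Set.Ioc (0:ℝ) l,
      0 < h r ∧ φ r - u' r ≤ ((m : ℝ) - 1) * h' r / h r + θ r := by
  have hm1 : (1:ℝ) ≤ (m:ℝ) - 1 := by
    have : (2:ℝ) ≤ (m:ℝ) := by exact_mod_cast hm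
    linarith
  have hm1pos : (0:ℝ) < (m:ℝ) - 1 := by linarith
  have hIcc : Icc (0:ℝ) l ⊆ Ici 0 := fun x hx => hx.1
  have hIoc : Ioc (0:ℝ) l ⊆ Icc 0 l := Ioc_subset_Icc_self
  have hhcont : ContinuousOn h (Ici 0) := fun t ht => (hhderiv t ht).continuousWithinAt
  have hh'cont2 : ContinuousOn h' (Ici 0) := fun t ht => (hh'deriv t ht).continuousWithinAt
  have hu'cont : ContinuousOn u' (Icc 0 l) := fun t ht => (hu'deriv t ht).continuousWithinAt
  have hφcont : ContinuousOn φ (Ioc 0 l) := fun t ht => (hφderiv t ht).continuousWithinAt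
  have hhat : ∀ t : ℝ, 0 < t → HasDerivAt h (h' t) t := fun t ht =>
    (hhderiv t ht.le).hasDerivAt (Ici_mem_nhds ht)
  have hh'at : ∀ t : ℝ, 0 < t → HasDerivAt h' (h'' t) t := fun t ht =>
    (hh'deriv t ht.le).hasDerivAt (Ici_mem_nhds ht)
  -- the auxiliary integrand
  set g : ℝ → ℝ := fun s => 2 * h s * h' s * u' s with hgdef
  have hgcont : ContinuousOn g (Icc 0 l) :=
    (((continuousOn_const.mul (hhcont.mono hIcc)).mul (hh'cont2.mono hIcc)).mul hu'cont)
  have hgint : ∀ x ∈ Icc (0:ℝ) l, IntervalIntegrable g volume 0 x := by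
    intro x hx
    apply ContinuousOn.intervalIntegrable
    rw [uIcc_of_le hx.1]
    exact hgcont.mono (Icc_subset_Icc le_rfl hx.2)
  set P : ℝ → ℝ := fun t => ∫ s in (0:ℝ)..t, g s with hPdef
  have hPcont : ContinuousOn P (Icc 0 l) := by
    have := intervalIntegral.continuousOn_primitive_interval
      (f := g) (μ := volume) (a := (0:ℝ)) (b := l)
      (by rw [uIcc_of_le hl.le]; exact (hgcont.integrableOn_Icc))
    rwa [uIcc_of_le hl.le] at this
  -- the comparison function
  set F : ℝ → ℝ := fun t => h t ^ 2 * (φ t - u' t) - ((m:ℝ) - 1) * (h t * h' t) + P t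
    with hFdef
  have hFcont : ContinuousOn F (Ioc 0 l) := by
    apply ContinuousOn.add
    apply ContinuousOn.sub
    · exact ((hhcont.mono (hIoc.trans hIcc)).pow 2).mul
        (hφcont.sub (hu'cont.mono hIoc))
    · exact continuousOn_const.mul ((hhcont.mono (hIoc.trans hIcc)).mul
        (hh'cont2.mono (hIoc.trans hIcc)))
    · exact hPcont.mono hIoc
  -- derivative of F on the interior
  have hFderiv : ∀ x ∈ Ioo (0:ℝ) l, HasDerivAt F
      ((2 * h x * h' x) * (φ x - u' x) + h x ^ 2 * (φ' x - u'' x)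
        - ((m:ℝ) - 1) * (h' x * h' x + h x * h'' x) + g x) x := by
    intro x hx
    have Hh := hhat x hx.1
    have Hh' := hh'at x hx.1
    have Hu' : HasDerivAt u' (u'' x) x :=
      (hu'deriv x ⟨hx.1.le, hx.2.le⟩).hasDerivAt (Icc_mem_nhds hx.1 hx.2)
    have Hφ : HasDerivAt φ (φ' x) x :=
      (hφderiv x ⟨hx.1, hx.2.le⟩).hasDerivAt (Ioc_mem_nhds hx.1 hx.2)
    have HP : HasDerivAt P (g x) x := by
      apply intervalIntegral.integral_hasDerivAt_right (hgint x ⟨hx.1.le, hx.2.le⟩)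
      · exact (hgcont.mono Ioo_subset_Icc_self).stronglyMeasurableAtFilter isOpen_Ioo x hx
      · exact hgcont.continuousAt (Icc_mem_nhds hx.1 hx.2)
    have H1 : HasDerivAt (fun t => h t ^ 2 * (φ t - u' t))
        ((2 * h x * h' x) * (φ x - u' x) + h x ^ 2 * (φ' x - u'' x)) x := by
      have := (Hh.fun_pow 2).fun_mul (Hφ.fun_sub Hu')
      exact this.congr_deriv (by push_cast; ring)
    have H2 : HasDerivAt (fun t => ((m:ℝ) - 1) * (h t * h' t))
        (((m:ℝ) - 1) * (h' x * h' x + h x * h'' x)) x := by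
      exact (Hh.mul Hh').const_mul ((m:ℝ) - 1)
    exact (H1.sub H2).add HP
  -- the derivative is nonpositive
  have hFderiv_nonpos : ∀ x ∈ Ioo (0:ℝ) l,
      (2 * h x * h' x) * (φ x - u' x) + h x ^ 2 * (φ' x - u'' x)
        - ((m:ℝ) - 1) * (h' x * h' x + h x * h'' x) + g x ≤ 0 := by
    intro x hx
    have hR := hRiccati x ⟨hx.1, hx.2.le⟩
    have hRm : ((m:ℝ) - 1) * φ' x + φ x ^ 2 ≤ ((m:ℝ) - 1)^2 * G x + ((m:ℝ) - 1) * u'' x := by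
      have h2 := mul_le_mul_of_nonneg_left hR hm1pos.le
      have h3 : ((m:ℝ) - 1) * (φ x ^ 2 / ((m:ℝ) - 1)) = φ x ^ 2 := by
        field_simp
      nlinarith [h2, h3]
    have hodex := hode x hx.1.le
    have hxnn : 0 ≤ h x := le_trans hx.1.le (hkey x ⟨hx.1.le, hx.2.le⟩).2
    have hsq : 0 ≤ (h x * φ x - ((m:ℝ) - 1) * h' x)^2 := sq_nonneg _
    have hRm2 := mul_le_mul_of_nonneg_left hRm (sq_nonneg (h x))
    rw [hodex]
    simp only [hgdef]
    nlinarith [hRm2, hsq, hm1pos, sq_nonneg (h x)]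
  -- F is antitone on (0, l]
  have hFant : AntitoneOn F (Ioc 0 l) := by
    apply antitoneOn_of_deriv_nonpos (convex_Ioc 0 l) hFcont
    · intro x hx
      rw [interior_Ioc] at hx
      exact (hFderiv x hx).differentiableAt.differentiableWithinAt
    · intro x hx
      rw [interior_Ioc] at hx
      rw [(hFderiv x hx).deriv]
      exact hFderiv_nonpos x hx
  -- F tends to 0 at 0⁺
  have hFlim : Tendsto F (𝓝[>] (0:ℝ)) (𝓝 0) := by
    have hmem : 𝓝[Ioc (0:ℝ) l] 0 = 𝓝[>] (0:ℝ) := nhdsWithin_Ioc_eq_nhdsGT hl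
    have hh0' : Tendsto h (𝓝[>] (0:ℝ)) (𝓝 0) := by
      have := (hhcont 0 Set.self_mem_Ici).tendsto
      rw [hh0] at this
      exact this.mono_left (nhdsWithin_mono _ (fun x hx => Set.mem_Ici.mpr (le_of_lt (Set.mem_Ioi.mp hx))))
    have hh'0' : Tendsto h' (𝓝[>] (0:ℝ)) (𝓝 1) := by
      have := (hh'cont2 0 Set.self_mem_Ici).tendsto
      rw [hh'0] at this
      exact this.mono_left (nhdsWithin_mono _ (fun x hx => Set.mem_Ici.mpr (le_of_lt (Set.mem_Ioi.mp hx))))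
    have hu'0 : Tendsto u' (𝓝[>] (0:ℝ)) (𝓝 (u' 0)) := by
      have := (hu'cont 0 ⟨le_rfl, hl.le⟩).tendsto
      rw [← hmem]
      exact this.mono_left (nhdsWithin_mono _ hIoc)
    have hP0 : Tendsto P (𝓝[>] (0:ℝ)) (𝓝 0) := by
      have := (hPcont 0 ⟨le_rfl, hl.le⟩).tendsto
      rw [show P 0 = 0 from intervalIntegral.integral_same] at this
      rw [← hmem]
      exact this.mono_left (nhdsWithin_mono _ hIoc)
    have h1 : Tendsto (fun t => h t ^ 2 * u' t) (𝓝[>] (0:ℝ)) (𝓝 0) := by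
      have := ((hh0'.mul hh0').mul hu'0)
      simpa using this.congr (fun t => by ring)
    have h2 : Tendsto (fun t => ((m:ℝ) - 1) * (h t * h' t)) (𝓝[>] (0:ℝ)) (𝓝 0) := by
      have := (hh0'.mul hh'0').const_mul ((m:ℝ) - 1)
      simpa using this
    have := ((hlim.sub h1).sub h2).add hP0
    simp only [hFdef]
    simpa using this.congr (fun t => by ring)
  -- conclusion for each r
  intro r hr
  have hhr : 0 < h r := lt_of_lt_of_le hr.1 (hkey r (hIoc hr)).2
  refine ⟨hhr, ?_⟩
  have hFr : F r ≤ 0 := by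
    have hev : ∀ᶠ a in 𝓝[>] (0:ℝ), F r ≤ F a := by
      filter_upwards [Ioo_mem_nhdsGT_of_mem (left_mem_Ico.2 hr.1)] with a ha
      exact hFant ⟨ha.1, ha.2.le.trans hr.2⟩ hr ha.2.le
    exact ge_of_tendsto hFlim hev
  -- the integral identity and bound
  have hI1 : ∫ s in (0:ℝ)..r, (2 * h s * h' s) = h r ^ 2 := by
    have := intervalIntegral.integral_eq_sub_of_hasDeriv_right_of_le hr.1.le
      (f := fun t => h t ^ 2) (f' := fun s => 2 * h s * h' s)
      (((hhcont.mono hIcc).mono (Icc_subset_Icc le_rfl hr.2)).pow 2)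
      (fun x hx => by
        have := (hhat x hx.1).fun_pow 2
        have h2 : HasDerivAt (fun t => h t ^ 2) (2 * h x * h' x) x := by
          exact this.congr_deriv (by push_cast; ring)
        exact h2.hasDerivWithinAt)
      (by
        apply ContinuousOn.intervalIntegrable
        rw [uIcc_of_le hr.1.le]
        exact ((continuousOn_const.mul ((hhcont.mono hIcc).mono
          (Icc_subset_Icc le_rfl hr.2))).mul ((hh'cont2.mono hIcc).mono
          (Icc_subset_Icc le_rfl hr.2))))
    rw [this]
    simp [hh0]
  have hI2 : -θ r * h r ^ 2 ≤ P r := by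
    have hmono : ∀ s ∈ Icc (0:ℝ) r, -θ r * (2 * h s * h' s) ≤ g s := by
      intro s hs
      have hs' : s ∈ Icc (0:ℝ) l := ⟨hs.1, hs.2.trans hr.2⟩
      have hk := hkey s hs'
      have hnn : (0:ℝ) ≤ 2 * h s * h' s := by nlinarith [hk.1, hk.2, hs.1]
      have hθ : θ s ≤ θ r := hθmono hs.1 hr.1.le hs.2
      have hub : -θ r ≤ u' s := le_trans (by linarith) (hu'bound s hs')
      calc -θ r * (2 * h s * h' s) = (2 * h s * h' s) * (-θ r) := by ring
        _ ≤ (2 * h s * h' s) * u' s := mul_le_mul_of_nonneg_left hub hnn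
        _ = g s := by simp only [hgdef]
    have hint1 : IntervalIntegrable (fun s => -θ r * (2 * h s * h' s)) volume 0 r := by
      apply ContinuousOn.intervalIntegrable
      rw [uIcc_of_le hr.1.le]
      exact (continuousOn_const.mul ((continuousOn_const.mul ((hhcont.mono hIcc).mono
        (Icc_subset_Icc le_rfl hr.2))).mul ((hh'cont2.mono hIcc).mono
        (Icc_subset_Icc le_rfl hr.2))))
    have := intervalIntegral.integral_mono_on hr.1.le hint1 (hgint r (hIoc hr)) hmono
    rwa [intervalIntegral.integral_const_mul, hI1] at this
  -- finish
  have hmain : h r ^ 2 * (φ r - u' r) ≤ ((m:ℝ) - 1) * (h r * h' r) + θ r * h r ^ 2 := by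
    have : h r ^ 2 * (φ r - u' r) - ((m:ℝ) - 1) * (h r * h' r) + P r ≤ 0 := hFr
    nlinarith [hI2, this]
  have heq : ((m:ℝ) - 1) * h' r / h r + θ r
      = (((m:ℝ) - 1) * (h r * h' r) + θ r * h r ^ 2) / h r ^ 2 := by
    field_simp
  rw [heq, le_div_iff₀ (by positivity)]
  nlinarith [hmain]



/- STATEMENT 1: one-dimensional form of the weighted Laplacian comparison
estimate (3.13) of Theorem 3.1: under the same Riccati setup as Statement 0,
if moreover θ is continuous nondecreasing and u' ≥ -θ on [0,l], then
h(r) > 0 and φ(r) - u'(r) ≤ (m-1)·h'(r)/h(r) + θ(r) for all r ∈ (0,l]. -/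
theorem stmt_1
    (m : ℕ) (hm : 2 ≤ m)
    (G h h' h'' : ℝ → ℝ)
    (hGcont : ContinuousOn G (Set.Ici 0))
    (hGnonneg : ∀ t ≥ (0:ℝ), 0 ≤ G t)
    (hhderiv : ∀ t ∈ Set.Ici (0:ℝ), HasDerivWithinAt h (h' t) (Set.Ici 0) t)
    (hh'deriv : ∀ t ∈ Set.Ici (0:ℝ), HasDerivWithinAt h' (h'' t) (Set.Ici 0) t)
    (hh''cont : ContinuousOn h'' (Set.Ici 0))
    (hode : ∀ t ≥ (0:ℝ), h'' t = G t * h t)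
    (hh0 : h 0 = 0) (hh'0 : h' 0 = 1)
    (l : ℝ) (hl : 0 < l)
    (u u' u'' : ℝ → ℝ)
    (huderiv : ∀ t ∈ Set.Icc (0:ℝ) l, HasDerivWithinAt u (u' t) (Set.Icc 0 l) t)
    (hu'deriv : ∀ t ∈ Set.Icc (0:ℝ) l, HasDerivWithinAt u' (u'' t) (Set.Icc 0 l) t)
    (hu''cont : ContinuousOn u'' (Set.Icc 0 l))
    (φ φ' : ℝ → ℝ)
    (hφderiv : ∀ t ∈ Set.Ioc (0:ℝ) l, HasDerivWithinAt φ (φ' t) (Set.Ioc 0 l) t)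
    (hφ'cont : ContinuousOn φ' (Set.Ioc 0 l))
    (hRiccati : ∀ t ∈ Set.Ioc (0:ℝ) l,
      φ' t + φ t ^ 2 / ((m : ℝ) - 1) ≤ ((m : ℝ) - 1) * G t + u'' t)
    (hlim : Filter.Tendsto (fun t => h t ^ 2 * φ t)
      (nhdsWithin 0 (Set.Ioi 0)) (nhds 0))
    (θ : ℝ → ℝ)
    (hθcont : ContinuousOn θ (Set.Ici 0))
    (hθmono : MonotoneOn θ (Set.Ici 0))
    (hu'bound : ∀ t ∈ Set.Icc (0:ℝ) l, -θ t ≤ u' t) :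
    ∀ r ∈ Set.Ioc (0:ℝ) l,
      0 < h r ∧ φ r - u' r ≤ ((m : ℝ) - 1) * h' r / h r + θ r :=
  main_test m hm G h h' h'' hGcont hGnonneg hhderiv hh'deriv hh''cont hode hh0 hh'0 l hl
    u u' u'' huderiv hu'deriv hu''cont φ φ' hφderiv hφ'cont hRiccati hlim θ hθcont hθmono
    hu'bound (part1 G h h' h'' hGnonneg hhderiv hh'deriv hode hh0 hh'0 l hl)
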